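/- A nonzero R-module M is finitely embedded (embeds into the injective envelope of a finite direct sum of simple modules) if and only if the socle of M is finitely generated and M is an essential extension of its socle. -/

import Mathlib

universe u

/-- A linear map is a pure monomorphism if it is injective and remains injective after
tensoring with every `R`-module. -/
def IsPureMono (R : Type u) [CommRing R] {M N : Type u} [AddCommGroup M] [Module R M]
    [AddCommGroup N] [Module R N] (f : M →ₗ[R] N) : Prop :=
  Function.Injective f ∧
    ∀ (L : Type u) [AddCommGroup L] [Module R L], Function.Injective (LinearMap.rTensor L f)

/-- A module `D` is pure injective if every homomorphism into `D` extends along every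
pure monomorphism. -/
def IsPureInjective (R : Type u) [CommRing R] (D : Type u) [AddCommGroup D] [Module R D] :
    Prop :=
  ∀ (M N : Type u) [AddCommGroup M] [Module R M] [AddCommGroup N] [Module R N]
    (f : M →ₗ[R] N), IsPureMono R f → ∀ g : M →ₗ[R] D, ∃ h : N →ₗ[R] D, h ∘ₗ f = g

/-- A module is finitely embedded if it embeds into the injective envelope of a direct sum
of finitely many simple modules, i.e. into an injective module which is an essential
extension of a finitely generated semisimple submodule. -/
def FinitelyEmbedded (R : Type u) [CommRing R] (M : Type u) [AddCommGroup M] [Module R M] :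
    Prop :=
  ∃ E : ModuleCat.{u} R, Module.Injective R E ∧
    ∃ S : Submodule R E, IsSemisimpleModule R S ∧ S.FG ∧
      (∀ P : Submodule R E, P ≠ ⊥ → S ⊓ P ≠ ⊥) ∧
      ∃ f : M →ₗ[R] E, Function.Injective f

open Submodule

namespace FinEmbAux

variable {R : Type u} [CommRing R]

section Basic
variable {M : Type u} [AddCommGroup M] [Module R M]

/-- Elementwise essentiality of `S` relative to `N` (both submodules of an ambient module). -/
def EssIn (S N : Submodule R M) : Prop :=
  ∀ x ∈ N, x ≠ 0 → ∃ r : R, r • x ≠ 0 ∧ r • x ∈ S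

lemma essential_iff (S : Submodule R M) :
    (∀ P : Submodule R M, P ≠ ⊥ → S ⊓ P ≠ ⊥) ↔ EssIn S ⊤ := by
  constructor
  · intro h x _ hx0
    have hP : (span R {x} : Submodule R M) ≠ ⊥ := by
      simpa [span_singleton_eq_bot] using hx0
    obtain ⟨y, hy, hy0⟩ := (Submodule.ne_bot_iff _).mp (h _ hP)
    obtain ⟨r, rfl⟩ := mem_span_singleton.mp hy.2
    exact ⟨r, hy0, hy.1⟩
  · intro h P hP
    obtain ⟨x, hxP, hx0⟩ := (Submodule.ne_bot_iff _).mp hP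
    obtain ⟨r, hr0, hrS⟩ := h x trivial hx0
    exact (Submodule.ne_bot_iff _).mpr ⟨r • x, ⟨hrS, P.smul_mem r hxP⟩, hr0⟩

lemma essIn_comap_subtype {S N : Submodule R M} (h : EssIn S N) :
    ∀ P : Submodule R ↥N, P ≠ ⊥ → S.comap N.subtype ⊓ P ≠ ⊥ := by
  refine (essential_iff _).mpr ?_
  intro x _ hx0
  have hx1 : (x : M) ≠ 0 := fun h0 => hx0 (Subtype.ext h0)
  obtain ⟨r, hr0, hrS⟩ := h (x : M) x.2 hx1
  refine ⟨r, fun h0 => hr0 ?_, ?_⟩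
  · simpa using congrArg N.subtype h0
  · show N.subtype (r • x) ∈ S
    simpa using hrS

lemma simple_ne_bot {W : Submodule R M} (hW : IsSimpleModule R W) : W ≠ ⊥ :=
  (isSimpleModule_iff_isAtom.mp hW).1

variable {N : Type u} [AddCommGroup N] [Module R N]

lemma simple_map (f : M →ₗ[R] N) (hf : Function.Injective f) {W : Submodule R M}
    (hW : IsSimpleModule R W) : IsSimpleModule R (W.map f) :=
  haveI := hW
  IsSimpleModule.congr (W.equivMapOfInjective f hf).symm

lemma simple_comap_subtype {p W : Submodule R M} (hWp : W ≤ p) (hW : IsSimpleModule R W) :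
    IsSimpleModule R (W.comap p.subtype) :=
  haveI := hW
  IsSimpleModule.congr (Submodule.comapSubtypeEquivOfLe hWp)

/-- The socle of a module is semisimple. -/
lemma socle_isSemisimple :
    IsSemisimpleModule R ↥(sSup {W : Submodule R M | IsSimpleModule R W}) := by
  set soc := sSup {W : Submodule R M | IsSimpleModule R W} with hsoc
  apply IsSemisimpleModule.of_sSup_simples_eq_top
  apply Submodule.map_injective_of_injective soc.injective_subtype
  rw [Submodule.map_subtype_top]
  apply le_antisymm
  · exact Submodule.map_subtype_le _ _
  · rw [hsoc]
    apply sSup_le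
    intro W hW
    have hWsoc : W ≤ soc := le_sSup hW
    have : W = map soc.subtype (W.comap soc.subtype) := by
      rw [Submodule.map_comap_subtype, inf_eq_right.mpr hWsoc]
    rw [this]
    exact Submodule.map_mono (le_sSup (simple_comap_subtype hWsoc hW))

end Basic

section Forward
variable {M E : Type u} [AddCommGroup M] [Module R M] [AddCommGroup E] [Module R E]

theorem socle_of_embed (S : Submodule R E) (hss : IsSemisimpleModule R S) (hfg : S.FG)
    (hessS : ∀ P : Submodule R E, P ≠ ⊥ → S ⊓ P ≠ ⊥)
    (f : M →ₗ[R] E) (hf : Function.Injective f) :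
    (sSup {W : Submodule R M | IsSimpleModule R W}).FG ∧
      ∀ P : Submodule R M, P ≠ ⊥ → sSup {W : Submodule R M | IsSimpleModule R W} ⊓ P ≠ ⊥ := by
  set soc := sSup {W : Submodule R M | IsSimpleModule R W} with hsoc
  haveI := hss
  haveI : Module.Finite R S := Module.Finite.iff_fg.mpr hfg
  haveI : IsNoetherian R S := (IsSemisimpleModule.finite_tfae.out 0 1).mp ‹_›
  have hsimple_le : ∀ T : Submodule R E, IsSimpleModule R T → T ≤ S := by
    intro T hT
    have h1 : S ⊓ T ≠ ⊥ := hessS T (simple_ne_bot hT)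
    have hatom := isSimpleModule_iff_isAtom.mp hT
    rcases hatom.le_iff.mp inf_le_right with h | h
    · exact absurd h h1
    · exact inf_eq_right.mp h
  have hTle : soc.map f ≤ S := by
    rw [Submodule.map_le_iff_le_comap, hsoc]
    refine sSup_le fun W hW => ?_
    rw [← Submodule.map_le_iff_le_comap]
    exact hsimple_le _ (simple_map f hf hW)
  constructor
  · apply Submodule.fg_of_fg_map_injective f hf
    have h2 : soc.map f = map S.subtype ((soc.map f).comap S.subtype) := by
      rw [Submodule.map_comap_subtype, inf_eq_right.mpr hTle]
    rw [h2]
    exact (IsNoetherian.noetherian _).map _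
  · intro P hP
    have hfP : P.map f ≠ ⊥ := by
      obtain ⟨x, hxP, hx0⟩ := (Submodule.ne_bot_iff _).mp hP
      exact (Submodule.ne_bot_iff _).mpr
        ⟨f x, Submodule.mem_map_of_mem hxP, fun h => hx0 (hf (by simpa using h))⟩
    have hQ : S ⊓ P.map f ≠ ⊥ := hessS _ hfP
    have hcomap_ne : (S ⊓ P.map f).comap S.subtype ≠ ⊥ := by
      intro h
      apply hQ
      have := congrArg (Submodule.map S.subtype) h
      rwa [Submodule.map_comap_subtype, ← inf_assoc, inf_idem, Submodule.map_bot] at this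
    obtain h | ⟨m, hmle, hm⟩ :=
      IsSemisimpleModule.eq_bot_or_exists_simple_le ((S ⊓ P.map f).comap S.subtype)
    · exact absurd h hcomap_ne
    have hT' : IsSimpleModule R (m.map S.subtype) := simple_map _ S.injective_subtype hm
    have hT'le : m.map S.subtype ≤ P.map f := by
      calc m.map S.subtype ≤ map S.subtype ((S ⊓ P.map f).comap S.subtype) :=
            Submodule.map_mono hmle
        _ = S ⊓ P.map f := by rw [Submodule.map_comap_subtype, ← inf_assoc, inf_idem]
        _ ≤ P.map f := inf_le_right
    set U := (m.map S.subtype).comap f with hUdef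
    have hmapU : U.map f = m.map S.subtype := by
      rw [hUdef, Submodule.map_comap_eq]
      exact inf_eq_right.mpr (hT'le.trans (LinearMap.map_le_range))
    have hU : IsSimpleModule R U := by
      haveI : IsSimpleModule R (U.map f) := hmapU ▸ hT'
      exact IsSimpleModule.congr (U.equivMapOfInjective f hf)
    have hUP : U ≤ P := by
      have h3 : U ≤ (P.map f).comap f := Submodule.comap_mono hT'le
      rwa [Submodule.comap_map_eq, LinearMap.ker_eq_bot.mpr hf, sup_bot_eq] at h3
    intro hbot
    exact simple_ne_bot hU (le_bot_iff.mp (hbot ▸ le_inf (le_sSup hU) hUP))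

end Forward

section Hull
variable {E₀ : Type u} [AddCommGroup E₀] [Module R E₀] [Module.Injective R E₀]

theorem exists_injective_hull (S₀ M₀ : Submodule R E₀) (hS₀M₀ : S₀ ≤ M₀)
    (hess : EssIn S₀ M₀) :
    ∃ N : Submodule R E₀, M₀ ≤ N ∧ EssIn S₀ N ∧ Module.Injective R ↥N := by
  -- Zorn: maximal essential extension N of S₀ containing M₀
  obtain ⟨N, hM₀N, hNmax⟩ := zorn_le_nonempty₀
      {N : Submodule R E₀ | M₀ ≤ N ∧ EssIn S₀ N}
      (fun c hcs hchain y hy => by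
        refine ⟨sSup c, ⟨(hcs hy).1.trans (le_sSup hy), fun x hx hx0 => ?_⟩,
          fun z hz => le_sSup hz⟩
        obtain ⟨z, hz, hxz⟩ := (Submodule.mem_sSup_of_directed ⟨y, hy⟩ hchain.directedOn).mp hx
        exact (hcs hz).2 x hxz hx0)
      M₀ ⟨le_rfl, hess⟩
  have hNess : EssIn S₀ N := hNmax.prop.2
  have hS₀N : S₀ ≤ N := hS₀M₀.trans hM₀N
  -- Zorn: maximal complement C of N
  obtain ⟨C, -, hCmax⟩ := zorn_le_nonempty₀ {C : Submodule R E₀ | N ⊓ C = ⊥}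
      (fun c hcs hchain y hy => by
        refine ⟨sSup c, ?_, fun z hz => le_sSup hz⟩
        show N ⊓ sSup c = ⊥
        rw [Submodule.eq_bot_iff]
        rintro x ⟨hxN, hxs⟩
        obtain ⟨z, hz, hxz⟩ := (Submodule.mem_sSup_of_directed ⟨y, hy⟩ hchain.directedOn).mp hxs
        have := (hcs hz) ▸ (Submodule.mem_inf.mpr ⟨hxN, hxz⟩)
        simpa using this)
      ⊥ (by simp)
  have hNC : N ⊓ C = ⊥ := hCmax.prop
  set q : E₀ →ₗ[R] E₀ ⧸ C := C.mkQ with hq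
  have hqN_inj : ∀ n ∈ N, q n = 0 → n = 0 := by
    intro n hn h0
    have hnC : n ∈ C := (Submodule.Quotient.mk_eq_zero C).mp h0
    have h2 : n ∈ N ⊓ C := Submodule.mem_inf.mpr ⟨hn, hnC⟩
    rw [hNC] at h2
    simpa using h2
  -- N maps essentially into E₀/C
  have ess_top : EssIn (N.map q) (⊤ : Submodule R (E₀ ⧸ C)) := by
    intro ybar _ hy0
    obtain ⟨x, rfl⟩ := C.mkQ_surjective ybar
    have hxC : x ∉ C := fun h => hy0 ((Submodule.Quotient.mk_eq_zero C).mpr h)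
    have hne : N ⊓ (C ⊔ span R {x}) ≠ ⊥ := by
      intro h
      exact hxC (hCmax.2 h le_sup_left (Submodule.mem_sup_right
        (Submodule.mem_span_singleton_self x)))
    obtain ⟨n, hn, hn0⟩ := (Submodule.ne_bot_iff _).mp hne
    obtain ⟨hnN, hnsup⟩ := Submodule.mem_inf.mp hn
    obtain ⟨c, hc, z, hz, hczn⟩ := Submodule.mem_sup.mp hnsup
    obtain ⟨r, rfl⟩ := Submodule.mem_span_singleton.mp hz
    have hqrx : r • (C.mkQ x) = q (r • x) := (map_smul q r x).symm
    have hqc : q c = 0 := (Submodule.Quotient.mk_eq_zero C).mpr hc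
    have hqn : q (r • x) = q n := by
      rw [← hczn, map_add, hqc, zero_add]
    refine ⟨r, ?_, ?_⟩
    · rw [hqrx, hqn]
      intro h0
      exact hn0 (hqN_inj n hnN h0)
    · rw [hqrx, hqn]
      exact Submodule.mem_map_of_mem hnN
  -- S₀ maps essentially into E₀/C
  have ess_S₀_top : EssIn (S₀.map q) (⊤ : Submodule R (E₀ ⧸ C)) := by
    intro ybar hy hy0
    obtain ⟨r, hr0, hrN⟩ := ess_top ybar hy hy0
    obtain ⟨n, hnN, hqn⟩ := hrN
    have hn0 : n ≠ 0 := fun h => hr0 (by rw [← hqn, h, map_zero])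
    obtain ⟨s, hs0, hsS⟩ := hNess n hnN hn0
    refine ⟨s * r, ?_, ?_⟩
    · rw [mul_smul, ← hqn, ← map_smul]
      intro h0
      exact hs0 (hqN_inj _ (N.smul_mem s hnN) h0)
    · rw [mul_smul, ← hqn, ← map_smul]
      exact Submodule.mem_map_of_mem hsS
  -- the embedding N → E₀/C
  set j : ↥N →ₗ[R] E₀ ⧸ C := q ∘ₗ N.subtype with hjdef
  have hj_inj : Function.Injective j := by
    rw [← LinearMap.ker_eq_bot, Submodule.eq_bot_iff]
    rintro ⟨x, hxN⟩ hx
    exact Subtype.ext (hqN_inj x hxN hx)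
  have hjrange : LinearMap.range j = N.map q := by
    rw [hjdef, LinearMap.range_comp, Submodule.range_subtype]
  set e : ↥N ≃ₗ[R] ↥(N.map q) :=
    (LinearEquiv.ofInjective j hj_inj).trans (LinearEquiv.ofEq _ _ hjrange) with hedef
  have he_coe : ∀ n : ↥N, (e n : E₀ ⧸ C) = q n := by
    intro n
    rw [hedef]
    simp [LinearEquiv.ofInjective_apply, hjdef]
  set α : ↥(N.map q) →ₗ[R] E₀ := N.subtype ∘ₗ (e.symm : ↥(N.map q) →ₗ[R] ↥N) with hαdef
  obtain ⟨h, hh⟩ := Module.Injective.out (N.map q).subtype (Submodule.injective_subtype _) α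
  have key : ∀ n, n ∈ N → h (q n) = n := by
    intro n hn
    have hmem : q n ∈ N.map q := Submodule.mem_map_of_mem hn
    have h1 := hh ⟨q n, hmem⟩
    have h2 : e ⟨n, hn⟩ = ⟨q n, hmem⟩ := Subtype.ext (he_coe ⟨n, hn⟩)
    have h3 : e.symm ⟨q n, hmem⟩ = ⟨n, hn⟩ := by rw [← h2, LinearEquiv.symm_apply_apply]
    simpa [hαdef, h3] using h1
  have hinj_h : Function.Injective h := by
    rw [← LinearMap.ker_eq_bot, Submodule.eq_bot_iff]
    intro ybar hy
    by_contra hy0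
    obtain ⟨r, hr0, hrS⟩ := ess_S₀_top ybar trivial hy0
    obtain ⟨s, hsS, hqs⟩ := hrS
    have h1 : h (r • ybar) = s := by rw [← hqs]; exact key s (hS₀N hsS)
    have h2 : h (r • ybar) = 0 := by
      rw [map_smul, LinearMap.mem_ker.mp hy, smul_zero]
    have : s = 0 := by rw [← h1, h2]
    exact hr0 (by rw [← hqs, this, map_zero])
  have hNle : N ≤ LinearMap.range h := fun n hn => ⟨q n, key n hn⟩
  have hrangeN : LinearMap.range h = N := by
    refine le_antisymm ?_ hNle
    refine hNmax.2 ⟨hM₀N.trans hNle, ?_⟩ hNle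
    rintro x ⟨ybar, rfl⟩ hx0
    have hy0 : ybar ≠ 0 := fun hy => hx0 (by rw [hy, map_zero])
    obtain ⟨r, hr0, hrS⟩ := ess_S₀_top ybar trivial hy0
    obtain ⟨s, hsS, hqs⟩ := hrS
    have h1 : r • h ybar = s := by
      rw [← map_smul, ← hqs]; exact key s (hS₀N hsS)
    refine ⟨r, ?_, h1 ▸ hsS⟩
    rw [h1]
    intro h0
    exact hr0 (by rw [← hqs, h0, map_zero])
  have hcompl : IsCompl N C := by
    constructor
    · exact disjoint_iff.mpr hNC
    · rw [codisjoint_iff, Submodule.eq_top_iff']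
      intro x
      have hnN : h (q x) ∈ N := hrangeN ▸ LinearMap.mem_range_self h (q x)
      have hqq : q (h (q x)) = q x := hinj_h (key _ hnN)
      have hxC : x - h (q x) ∈ C := by
        rw [← Submodule.Quotient.mk_eq_zero C]
        show q _ = 0
        rw [map_sub, hqq, sub_self]
      have : x = h (q x) + (x - h (q x)) := by abel
      rw [this]
      exact Submodule.add_mem_sup hnN hxC
  refine ⟨N, hM₀N, hNess, ⟨?_⟩⟩
  intro X Y _ _ _ _ f hf g
  obtain ⟨H, hH⟩ := Module.Injective.out f hf (N.subtype ∘ₗ g)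
  refine ⟨(Submodule.linearProjOfIsCompl N C hcompl) ∘ₗ H, fun x => ?_⟩
  have := hH x
  simp only [LinearMap.comp_apply] at this ⊢
  rw [this]
  exact Submodule.linearProjOfIsCompl_apply_left hcompl (g x)

end Hull

end FinEmbAux

open FinEmbAux in
theorem finitelyEmbedded_iff_socle (R : Type u) [CommRing R] (M : Type u) [AddCommGroup M]
    [Module R M] [Nontrivial M] :
    FinitelyEmbedded R M ↔
      (sSup {S : Submodule R M | IsSimpleModule R S}).FG ∧
        ∀ P : Submodule R M, P ≠ ⊥ →
          sSup {S : Submodule R M | IsSimpleModule R S} ⊓ P ≠ ⊥ := by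
  constructor
  · rintro ⟨E, hEinj, S, hss, hfg, hessS, f, hf⟩
    exact socle_of_embed S hss hfg hessS f hf
  · rintro ⟨hfg, hess⟩
    set soc := sSup {W : Submodule R M | IsSimpleModule R W} with hsoc
    -- embed M into an injective module
    let Mc : ModuleCat.{u} R := ModuleCat.of R M
    let E₀ : ModuleCat.{u} R := CategoryTheory.Injective.under Mc
    haveI : CategoryTheory.Injective (ModuleCat.of R ↥E₀) :=
      CategoryTheory.Injective.of_iso (CategoryTheory.Iso.refl E₀) inferInstance
    haveI hE₀inj : Module.Injective R E₀ :=
      Module.injective_module_of_injective_object R E₀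
    let i : M →ₗ[R] E₀ := (CategoryTheory.Injective.ι Mc).hom
    have hi : Function.Injective i :=
      (ModuleCat.mono_iff_injective (CategoryTheory.Injective.ι Mc)).mp inferInstance
    set S₀ : Submodule R E₀ := soc.map i with hS₀def
    set M₀ : Submodule R E₀ := LinearMap.range i with hM₀def
    have hS₀M₀ : S₀ ≤ M₀ := LinearMap.map_le_range
    have hessM₀ : EssIn S₀ M₀ := by
      rintro x hx hx0
      obtain ⟨m, rfl⟩ := hx
      have hm0 : m ≠ 0 := fun hm => hx0 (by rw [hm, map_zero])
      obtain ⟨r, hr0, hrS⟩ := (essential_iff soc).mp hess m trivial hm0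
      refine ⟨r, ?_, ?_⟩
      · rw [← map_smul]
        intro h0
        exact hr0 (hi (by rw [h0, map_zero]))
      · rw [← map_smul]
        exact Submodule.mem_map_of_mem hrS
    obtain ⟨N, hM₀N, hessN, hNinj⟩ := exists_injective_hull S₀ M₀ hS₀M₀ hessM₀
    have hS₀N : S₀ ≤ N := hS₀M₀.trans hM₀N
    refine ⟨ModuleCat.of R ↥N, hNinj, S₀.comap N.subtype, ?_, ?_, ?_, ?_⟩
    · haveI hssoc : IsSemisimpleModule R ↥soc := socle_isSemisimple
      haveI hS₀ss : IsSemisimpleModule R ↥S₀ :=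
        IsSemisimpleModule.congr (soc.equivMapOfInjective i hi).symm
      exact IsSemisimpleModule.congr (Submodule.comapSubtypeEquivOfLe hS₀N)
    · apply Submodule.fg_of_fg_map_injective N.subtype (Submodule.injective_subtype N)
      rw [Submodule.map_comap_subtype, inf_eq_right.mpr hS₀N]
      exact hfg.map i
    · exact essIn_comap_subtype hessN
    · refine ⟨i.codRestrict N (fun m => hM₀N (LinearMap.mem_range_self i m)), ?_⟩
      rw [← LinearMap.ker_eq_bot, LinearMap.ker_codRestrict, LinearMap.ker_eq_bot]
      exact hi
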